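/- Let K ⊂ ℝⁿ be a closed convex set containing the origin in its interior. Then for every x ∈ ℝⁿ, sup_{y ∈ K̂} ⟨x,y⟩ = sup_{y ∈ K̂ ∩ ext(K*)} ⟨x,y⟩, where ext(K*) is the set of extreme points of K*. -/

import Mathlib

open RealInnerProductSpace

variable {n : ℕ}

/-- The polar of a set `K`. -/
def polar (K : Set (EuclideanSpace ℝ (Fin n))) : Set (EuclideanSpace ℝ (Fin n)) :=
  {y | ∀ x ∈ K, ⟪x, y⟫ ≤ 1}

/-- The set `K̂` of points of the polar attaining value 1 on `K`. -/
def hatK (K : Set (EuclideanSpace ℝ (Fin n))) : Set (EuclideanSpace ℝ (Fin n)) :=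
  {y ∈ polar K | ∃ x ∈ K, ⟪x, y⟫ = 1}

/-- A function is sublinear if it is convex and positively homogeneous. -/
def IsSublinear (σ : EuclideanSpace ℝ (Fin n) → ℝ) : Prop :=
  ConvexOn ℝ Set.univ σ ∧ ∀ t : ℝ, 0 < t → ∀ x, σ (t • x) = t * σ x

/-- The recession cone of `K`. -/
def recCone (K : Set (EuclideanSpace ℝ (Fin n))) : Set (EuclideanSpace ℝ (Fin n)) :=
  {x ∈ K | ∀ t : ℝ, 0 < t → t • x ∈ K}

/-- The support function of a set `T`, as `x ↦ sup_{y ∈ T} ⟪x, y⟫`. -/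
noncomputable def suppFn (T : Set (EuclideanSpace ℝ (Fin n)))
    (x : EuclideanSpace ℝ (Fin n)) : ℝ :=
  sSup ((fun y => ⟪x, y⟫) '' T)

theorem stmt6 (K : Set (EuclideanSpace ℝ (Fin n)))
    (hKcl : IsClosed K) (hKconv : Convex ℝ K) (h0 : (0 : EuclideanSpace ℝ (Fin n)) ∈ interior K) :
    ∀ x, suppFn (hatK K) x = suppFn (hatK K ∩ Set.extremePoints ℝ (polar K)) x := by
  intro x
  obtain ⟨r, hr, hball⟩ := Metric.mem_nhds_iff.mp (mem_interior_iff_mem_nhds.mp h0)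
  -- polar is closed
  have hpcl : IsClosed (polar K) := by
    have : polar K = ⋂ z ∈ K, {y : EuclideanSpace ℝ (Fin n) | ⟪z, y⟫ ≤ 1} := by
      ext y; simp [polar, Set.mem_iInter]
    rw [this]
    exact isClosed_biInter fun z _ => isClosed_le (innerSL ℝ z).continuous continuous_const
  -- norm bound on polar
  have hbound : ∀ y ∈ polar K, ‖y‖ ≤ 2 / r := by
    intro y hy
    rcases eq_or_ne y 0 with rfl | hy0
    · simp; positivity
    · have hny : 0 < ‖y‖ := norm_pos_iff.mpr hy0
      set c := r / (2 * ‖y‖) with hc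
      have hcpos : 0 < c := by positivity
      have hmem : c • y ∈ K := by
        apply hball
        simp only [Metric.mem_ball, dist_zero_right, norm_smul, Real.norm_eq_abs,
          abs_of_pos hcpos]
        rw [hc]
        rw [div_mul_eq_mul_div, mul_comm]
        calc ‖y‖ * r / (2 * ‖y‖) = r / 2 := by field_simp
        _ < r := by linarith
      have := hy (c • y) hmem
      rw [real_inner_smul_left, real_inner_self_eq_norm_sq] at this
      rw [hc] at this
      rw [le_div_iff₀ hr]
      have h2 : r * ‖y‖ ^ 2 ≤ 2 * ‖y‖ := by
        have h3 := mul_le_mul_of_nonneg_right this (by positivity : (0:ℝ) ≤ 2 * ‖y‖)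
        calc r * ‖y‖ ^ 2 = r / (2 * ‖y‖) * ‖y‖ ^ 2 * (2 * ‖y‖) := by field_simp
          _ ≤ 1 * (2 * ‖y‖) := h3
          _ = 2 * ‖y‖ := one_mul _
      nlinarith [hny]
  have hpsub : polar K ⊆ Metric.closedBall 0 (2 / r) := fun y hy => by
    simpa [Metric.mem_closedBall, dist_zero_right] using hbound y hy
  have hpcomp : IsCompact (polar K) :=
    (isCompact_closedBall (0 : EuclideanSpace ℝ (Fin n)) (2 / r)).of_isClosed_subset hpcl hpsub
  -- key lemma
  have key : ∀ y ∈ hatK K, ∃ z, z ∈ hatK K ∩ Set.extremePoints ℝ (polar K) ∧ ⟪x, y⟫ ≤ ⟪x, z⟫ := by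
    rintro y ⟨hyp, x₀, hx₀K, hx₀y⟩
    set l₀ := innerSL ℝ x₀ with hl₀
    set F := {z ∈ polar K | ∀ w ∈ polar K, l₀ w ≤ l₀ z} with hF
    have hFexp : IsExposed ℝ (polar K) F := fun _ => ⟨l₀, rfl⟩
    have hyF : y ∈ F := by
      refine ⟨hyp, fun w hw => ?_⟩
      have : ⟪x₀, w⟫ ≤ 1 := hw x₀ hx₀K
      simpa [hl₀, innerSL_apply_apply, hx₀y] using this
    have hF1 : ∀ z ∈ F, ⟪x₀, z⟫ = 1 := by
      rintro z ⟨hzp, hzmax⟩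
      refine le_antisymm (hzp x₀ hx₀K) ?_
      have := hzmax y hyp
      simpa [hl₀, innerSL_apply_apply, hx₀y] using this
    have hFcomp : IsCompact F := hFexp.isCompact hpcomp
    have hFne : F.Nonempty := ⟨y, hyF⟩
    set l := innerSL ℝ x with hl
    set G := {z ∈ F | ∀ w ∈ F, l w ≤ l z} with hG
    have hGexp : IsExposed ℝ F G := fun _ => ⟨l, rfl⟩
    have hGne : G.Nonempty := by
      obtain ⟨z, hzF, hz⟩ := hFcomp.exists_isMaxOn hFne l.continuous.continuousOn
      exact ⟨z, hzF, fun w hw => hz hw⟩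
    have hGcomp : IsCompact G := hGexp.isCompact hFcomp
    obtain ⟨z, hz⟩ := hGcomp.extremePoints_nonempty hGne
    have hzG : z ∈ G := hz.1
    have hzext : z ∈ Set.extremePoints ℝ (polar K) :=
      (hFexp.isExtreme.trans hGexp.isExtreme).extremePoints_subset_extremePoints hz
    refine ⟨z, ⟨⟨hzG.1.1, x₀, hx₀K, hF1 z hzG.1⟩, hzext⟩, ?_⟩
    simpa [hl, innerSL_apply_apply] using hzG.2 y hyF
  rcases (hatK K).eq_empty_or_nonempty with hemp | hne
  · rw [hemp, Set.empty_inter]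
  · have hbdd : BddAbove ((fun y => ⟪x, y⟫) '' hatK K) := by
      refine ⟨‖x‖ * (2 / r), ?_⟩
      rintro _ ⟨y, hy, rfl⟩
      calc ⟪x, y⟫ ≤ ‖x‖ * ‖y‖ := real_inner_le_norm x y
        _ ≤ ‖x‖ * (2 / r) := by
            have := hbound y hy.1
            gcongr
    obtain ⟨y₀, hy₀⟩ := id hne
    obtain ⟨z₀, hz₀mem, _⟩ := key y₀ hy₀
    unfold suppFn
    apply le_antisymm
    · apply csSup_le (hne.image _)
      rintro _ ⟨y, hy, rfl⟩
      obtain ⟨z, hzmem, hle⟩ := key y hy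
      exact hle.trans (le_csSup (hbdd.mono (Set.image_mono Set.inter_subset_left))
        ⟨z, hzmem, rfl⟩)
    · exact csSup_le_csSup hbdd (⟨_, ⟨z₀, hz₀mem, rfl⟩⟩)
        (Set.image_mono Set.inter_subset_left)
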